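/- Let X ∈ ℝ^{N×D} have full column rank D, Y ∈ ℝ^{N×C}, 1 ≤ K ≤ D, and assume the eigenvalues λ_1 ≥ λ_2 ≥ … of YYᵀ satisfy λ_K > Σ_{i>K} λ_i and that the top-K eigenspace S of YYᵀ is contained in the column space of X. Then for every global minimizer (V*, W*) of (V, W) ↦ ‖XVW − Y‖_F² over V ∈ ℝ^{D×K}, W ∈ ℝ^{K×C} that additionally satisfies the normalization (V*)ᵀXᵀXV* = I_K, the matrix Z := XV* satisfies ZZᵀ = Π_S, the orthogonal projection matrix onto S; in particular ZZᵀ equals Σ_{k=1}^K v_k v_kᵀ for any orthonormal eigenvectors v_1, …, v_K of YYᵀ associated with its K largest eigenvalues. -/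

import Mathlib

open Matrix BigOperators

noncomputable section

/-- Squared Frobenius norm of a real matrix. -/
def frobSq {m n : Type*} [Fintype m] [Fintype n] (M : Matrix m n ℝ) : ℝ :=
  ∑ i, ∑ j, (M i j) ^ 2

/-- `AᵀA` is Hermitian over `ℝ`. -/
theorem isHermitian_tmul {m n : ℕ} (A : Matrix (Fin m) (Fin n) ℝ) :
    (Aᵀ * A).IsHermitian := by
  simpa [Matrix.conjTranspose_eq_transpose_of_trivial] using
    Matrix.isHermitian_conjTranspose_mul_self A

/-- `AAᵀ` is Hermitian over `ℝ`. -/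
theorem isHermitian_mult {m n : ℕ} (A : Matrix (Fin m) (Fin n) ℝ) :
    (A * Aᵀ).IsHermitian := by
  simpa [Matrix.conjTranspose_eq_transpose_of_trivial] using
    Matrix.isHermitian_mul_conjTranspose_self A

/-- The `i`-th eigenvalue of a real symmetric (Hermitian) matrix, in decreasing order
(`eigDesc hM 0` is the largest eigenvalue, counted with multiplicity). -/
def eigDesc {n : ℕ} {M : Matrix (Fin n) (Fin n) ℝ} (hM : M.IsHermitian) (i : Fin n) : ℝ :=
  hM.eigenvalues (Tuple.sort hM.eigenvalues i.rev)

/-- Sum of the `K` largest eigenvalues of a Hermitian matrix. -/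
def sumTopEig {n : ℕ} {M : Matrix (Fin n) (Fin n) ℝ} (hM : M.IsHermitian) (K : ℕ) : ℝ :=
  ∑ i : Fin n, if (i : ℕ) < K then eigDesc hM i else 0

/-- Sum of the eigenvalues of a Hermitian matrix after the `K` largest ones. -/
def sumTailEig {n : ℕ} {M : Matrix (Fin n) (Fin n) ℝ} (hM : M.IsHermitian) (K : ℕ) : ℝ :=
  ∑ i : Fin n, if K ≤ (i : ℕ) then eigDesc hM i else 0

/-- Top-`K` eigenspace of a Hermitian matrix: the sum of the eigenspaces associated with
its `K` largest eigenvalues. -/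
def topEigSpace {n : ℕ} {M : Matrix (Fin n) (Fin n) ℝ} (hM : M.IsHermitian) (K : ℕ) :
    Submodule ℝ (Fin n → ℝ) :=
  ⨆ i : {i : Fin n // (i : ℕ) < K},
    LinearMap.ker (M.mulVecLin - eigDesc hM i.1 • LinearMap.id)

/-- Ordinary least squares prediction of `Y` from `X`. -/
def ols {N D C : ℕ} (X : Matrix (Fin N) (Fin D) ℝ) (Y : Matrix (Fin N) (Fin C) ℝ) :
    Matrix (Fin N) (Fin C) ℝ :=
  X * (Xᵀ * X)⁻¹ * Xᵀ * Y

lemma frobSq_eq_trace {m n : Type*} [Fintype m] [Fintype n] (M : Matrix m n ℝ) :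
    frobSq M = (Mᵀ * M).trace := by
  simp [frobSq, Matrix.trace, Matrix.mul_apply, Matrix.diag, sq]
  exact Finset.sum_comm

lemma frobSq_nonneg {m n : Type*} [Fintype m] [Fintype n] (M : Matrix m n ℝ) :
    0 ≤ frobSq M :=
  Finset.sum_nonneg fun _ _ => Finset.sum_nonneg fun _ _ => sq_nonneg _

lemma sum_ite_lt {N K : ℕ} (hK : 0 < K) (hKN : K ≤ N) (g : Fin N → ℝ) :
    ∑ i : Fin N, (if (i : ℕ) < K then g i else 0) = ∑ j : Fin K, g (Fin.castLE hKN j) := by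
  rw [← Finset.sum_filter]
  refine Finset.sum_nbij' (fun i => (⟨(i : ℕ) % K, Nat.mod_lt _ hK⟩ : Fin K))
    (fun j => Fin.castLE hKN j) ?_ ?_ ?_ ?_ ?_ <;>
    simp only [Finset.mem_filter, Finset.mem_univ, true_and]
  · intro a _; trivial
  · intro a _; exact a.isLt
  · intro a ha; apply Fin.ext; simp [Nat.mod_eq_of_lt ha]
  · intro a _; apply Fin.ext; simp [Nat.mod_eq_of_lt a.isLt]
  · intro a ha; congr 1; apply Fin.ext; simp [Nat.mod_eq_of_lt ha]

lemma eigDesc_antitone {n : ℕ} {M : Matrix (Fin n) (Fin n) ℝ} (hM : M.IsHermitian) :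
    Antitone (eigDesc hM) := by
  intro i j hij
  have h := Tuple.monotone_sort hM.eigenvalues (Fin.rev_le_rev.mpr hij)
  simpa [eigDesc, Function.comp] using h

lemma proj_ext {n : ℕ} {M₁ M₂ : Matrix (Fin n) (Fin n) ℝ}
    (h1t : M₁ᵀ = M₁) (h2t : M₂ᵀ = M₂) (h1 : M₁ * M₁ = M₁) (h2 : M₂ * M₂ = M₂)
    (hr : LinearMap.range M₁.mulVecLin = LinearMap.range M₂.mulVecLin) : M₁ = M₂ := by
  have key : ∀ (A B : Matrix (Fin n) (Fin n) ℝ), A * A = A →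
      LinearMap.range B.mulVecLin ≤ LinearMap.range A.mulVecLin → A * B = B := by
    intro A B hAA hle
    ext i j
    have hcol : (fun k => B k j) ∈ LinearMap.range B.mulVecLin := by
      exact ⟨Pi.single j 1, by ext k; simp [Matrix.mulVecLin, Matrix.mulVec_single]⟩
    obtain ⟨w, hw⟩ := hle hcol
    have : A *ᵥ (fun k => B k j) = fun k => B k j := by
      rw [← hw]
      show A *ᵥ (A *ᵥ w) = A *ᵥ w
      rw [Matrix.mulVec_mulVec, hAA]
    have := congrFun this i
    simpa [Matrix.mul_apply, Matrix.mulVec, dotProduct] using this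
  have e1 : M₁ * M₂ = M₂ := key M₁ M₂ h1 hr.ge
  have e2 : M₂ * M₁ = M₁ := key M₂ M₁ h2 hr.le
  have e1' : M₂ * M₁ = M₂ := by
    have h := congrArg Matrix.transpose e1
    rwa [Matrix.transpose_mul, h1t, h2t] at h
  rw [← e2, e1']


lemma range_PPt {N K : ℕ} (P : Matrix (Fin N) (Fin K) ℝ) (hP : Pᵀ * P = 1) :
    LinearMap.range (P * Pᵀ).mulVecLin = LinearMap.range P.mulVecLin := by
  apply le_antisymm
  · rintro _ ⟨v, rfl⟩
    exact ⟨Pᵀ *ᵥ v, by show P *ᵥ (Pᵀ *ᵥ v) = (P * Pᵀ) *ᵥ v; rw [Matrix.mulVec_mulVec]⟩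
  · rintro _ ⟨w, rfl⟩
    refine ⟨P *ᵥ w, ?_⟩
    show (P * Pᵀ) *ᵥ (P *ᵥ w) = P *ᵥ w
    rw [Matrix.mulVec_mulVec, Matrix.mul_assoc, hP, Matrix.mul_one]

lemma mulVecLin_inj {N K : ℕ} (P : Matrix (Fin N) (Fin K) ℝ) (hP : Pᵀ * P = 1) :
    Function.Injective P.mulVecLin := by
  intro w w' h
  have h2 : Pᵀ *ᵥ (P *ᵥ w) = Pᵀ *ᵥ (P *ᵥ w') := by
    show Pᵀ *ᵥ (P.mulVecLin w) = Pᵀ *ᵥ (P.mulVecLin w'); rw [h]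
  rwa [Matrix.mulVec_mulVec, Matrix.mulVec_mulVec, hP, Matrix.one_mulVec, Matrix.one_mulVec] at h2

lemma finrank_range_orth {N K : ℕ} (P : Matrix (Fin N) (Fin K) ℝ) (hP : Pᵀ * P = 1) :
    Module.finrank ℝ (LinearMap.range P.mulVecLin) = K := by
  rw [LinearMap.finrank_range_of_inj (mulVecLin_inj P hP)]
  simp

lemma mulVec_eq_sum_cols {N K : ℕ} (P : Matrix (Fin N) (Fin K) ℝ) (w : Fin K → ℝ) :
    P *ᵥ w = ∑ j, w j • (fun i => P i j) := by
  ext i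
  simp [Matrix.mulVec, dotProduct, Finset.sum_apply, mul_comm]

lemma range_le_topEigSpace {N K : ℕ} (hKN : K ≤ N) {A : Matrix (Fin N) (Fin N) ℝ}
    (hA : A.IsHermitian) (P : Matrix (Fin N) (Fin K) ℝ)
    (heig : ∀ j : Fin K, A *ᵥ (fun i => P i j)
      = eigDesc hA (Fin.castLE hKN j) • fun i => P i j) :
    LinearMap.range P.mulVecLin ≤ topEigSpace hA K := by
  rintro _ ⟨w, rfl⟩
  have hw : P.mulVecLin w = ∑ j, w j • (fun i => P i j) := mulVec_eq_sum_cols P w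
  rw [hw]
  apply Submodule.sum_mem
  intro j _
  apply Submodule.smul_mem
  have hj : ((Fin.castLE hKN j : Fin N) : ℕ) < K := j.isLt
  refine le_iSup (fun i : {i : Fin N // (i : ℕ) < K} =>
    LinearMap.ker (A.mulVecLin - eigDesc hA i.1 • LinearMap.id)) ⟨Fin.castLE hKN j, hj⟩ ?_
  rw [LinearMap.mem_ker]
  have := heig j
  simp only [LinearMap.sub_apply, LinearMap.smul_apply, LinearMap.id_apply,
    Matrix.mulVecLin_apply, this, sub_self]

lemma trace_conj_orth_eig {N K : ℕ} (hK1 : 1 ≤ K) (hKN : K ≤ N)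
    {A : Matrix (Fin N) (Fin N) ℝ} (hA : A.IsHermitian) (P : Matrix (Fin N) (Fin K) ℝ)
    (hP : Pᵀ * P = 1)
    (heig : ∀ j : Fin K, A *ᵥ (fun i => P i j)
      = eigDesc hA (Fin.castLE hKN j) • fun i => P i j) :
    (Pᵀ * A * P).trace = sumTopEig hA K := by
  rw [sumTopEig, sum_ite_lt hK1 hKN]
  rw [Matrix.trace]
  apply Finset.sum_congr rfl
  intro j _
  have hcol : ∀ i, (A * P) i j = eigDesc hA (Fin.castLE hKN j) * P i j := by
    intro i
    have := congrFun (heig j) i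
    simpa [Matrix.mulVec, dotProduct, Matrix.mul_apply] using this
  have hdiag : (Pᵀ * P) j j = 1 := by rw [hP]; simp
  simp only [Matrix.diag_apply, Matrix.mul_assoc, Matrix.mul_apply, Matrix.transpose_apply]
  calc ∑ i, P i j * (A * P) i j = ∑ i, eigDesc hA (Fin.castLE hKN j) * (P i j * P i j) := by
        apply Finset.sum_congr rfl; intro i _; rw [hcol i]; ring
    _ = eigDesc hA (Fin.castLE hKN j) := by
        rw [← Finset.mul_sum]
        have : ∑ i, P i j * P i j = 1 := by
          simpa [Matrix.mul_apply] using hdiag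
        rw [this, mul_one]

lemma sum_reindex_top {N K : ℕ} (hK1 : 1 ≤ K) (hKN : K ≤ N) (σ : Equiv.Perm (Fin N))
    (F : Fin N → ℝ) (hF : ∀ m, K ≤ ((σ.symm m : Fin N) : ℕ) → F m = 0) :
    ∑ m, F m = ∑ a : Fin K, F (σ (Fin.castLE hKN a)) := by
  have h1 : ∑ m, F m = ∑ i, F (σ i) :=
    (Fintype.sum_equiv σ (fun i => F (σ i)) F (fun i => rfl)).symm
  have h2 : ∀ i : Fin N, F (σ i) = if (i : ℕ) < K then F (σ i) else 0 := by
    intro i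
    by_cases h : (i : ℕ) < K
    · simp [h]
    · simp only [h, if_false]
      exact hF (σ i) (by simpa using Nat.le_of_not_lt h)
  rw [h1, Finset.sum_congr rfl (fun i _ => h2 i), sum_ite_lt hK1 hKN]

set_option maxHeartbeats 1000000 in
theorem spectralPack {N K : ℕ} (hK1 : 1 ≤ K) (hKN : K ≤ N)
    {A : Matrix (Fin N) (Fin N) ℝ} (hA : A.IsHermitian)
    (hPSD : ∀ i, 0 ≤ hA.eigenvalues i)
    (hgap : eigDesc hA ⟨K - 1, by omega⟩ > sumTailEig hA K) :
    ∃ P₀ : Matrix (Fin N) (Fin K) ℝ,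
      P₀ᵀ * P₀ = 1 ∧
      (∀ j : Fin K, A *ᵥ (fun i => P₀ i j)
        = eigDesc hA (Fin.castLE hKN j) • fun i => P₀ i j) ∧
      topEigSpace hA K ≤ LinearMap.range (P₀ * P₀ᵀ).mulVecLin ∧
      ∀ Z : Matrix (Fin N) (Fin K) ℝ, Zᵀ * Z = 1 →
        sumTopEig hA K ≤ (Zᵀ * A * Z).trace → Z * Zᵀ = P₀ * P₀ᵀ := by
  set U : Matrix (Fin N) (Fin N) ℝ := (hA.eigenvectorUnitary : Matrix (Fin N) (Fin N) ℝ)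
    with hUdef
  set μ : Fin N → ℝ := hA.eigenvalues with hμdef
  have hU1 : Uᵀ * U = 1 := by
    have h := hA.eigenvectorUnitary.2
    rw [Matrix.mem_unitaryGroup_iff'] at h
    simpa [hUdef, Matrix.star_eq_conjTranspose,
      Matrix.conjTranspose_eq_transpose_of_trivial] using h
  have hU2 : U * Uᵀ = 1 := by
    have h := hA.eigenvectorUnitary.2
    rw [Matrix.mem_unitaryGroup_iff] at h
    simpa [hUdef, Matrix.star_eq_conjTranspose,
      Matrix.conjTranspose_eq_transpose_of_trivial] using h
  have hspec : A = U * Matrix.diagonal μ * Uᵀ := by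
    have h := hA.spectral_theorem
    simpa [hUdef, hμdef, Matrix.star_eq_conjTranspose,
      Matrix.conjTranspose_eq_transpose_of_trivial, Function.comp] using h
  set σ : Equiv.Perm (Fin N) := Fin.revPerm.trans (Tuple.sort μ) with hσdef
  have heig : ∀ i, eigDesc hA i = μ (σ i) := by
    intro i; simp [eigDesc, hσdef, hμdef]
  have hKpos : (K - 1 : ℕ) < N := by omega
  set c : ℝ := eigDesc hA ⟨K - 1, hKpos⟩ with hcdef
  have horthU : ∀ m m' : Fin N, ∑ i, U i m * U i m' = if m = m' then 1 else 0 := by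
    intro m m'
    have h := congrFun (congrFun hU1 m) m'
    simpa [Matrix.mul_apply, Matrix.one_apply] using h
  set P₀ : Matrix (Fin N) (Fin K) ℝ :=
    Matrix.of fun i j => U i (σ (Fin.castLE hKN j)) with hPdef
  have horth : P₀ᵀ * P₀ = 1 := by
    ext a b
    simp only [Matrix.mul_apply, Matrix.transpose_apply, hPdef, Matrix.of_apply,
      Matrix.one_apply]
    rw [horthU (σ (Fin.castLE hKN a)) (σ (Fin.castLE hKN b))]
    simp [Equiv.apply_eq_iff_eq, Fin.castLE_inj]
  have hAU : A * U = U * Matrix.diagonal μ := by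
    rw [hspec, Matrix.mul_assoc, Matrix.mul_assoc, hU1, Matrix.mul_one]
  have hcolEig : ∀ m : Fin N, A *ᵥ (fun i => U i m) = μ m • (fun i => U i m) := by
    intro m
    funext i
    have h := congrFun (congrFun hAU i) m
    rw [Matrix.mul_diagonal] at h
    simp only [Matrix.mul_apply] at h
    simpa [Matrix.mulVec, dotProduct, mul_comm] using h
  have hPSD' : ∀ i, 0 ≤ eigDesc hA i := fun i => by rw [heig]; exact hPSD _
  have heigP : ∀ j : Fin K, A *ᵥ (fun i => P₀ i j)
      = eigDesc hA (Fin.castLE hKN j) • fun i => P₀ i j := by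
    intro j
    have h := hcolEig (σ (Fin.castLE hKN j))
    rw [heig]
    exact h
  have hanti : Antitone (eigDesc hA) := eigDesc_antitone hA
  have htail_le : ∀ i : Fin N, K ≤ (i : ℕ) → eigDesc hA i ≤ sumTailEig hA K := by
    intro i hi
    have h := Finset.single_le_sum (f := fun i' : Fin N =>
      if K ≤ (i' : ℕ) then eigDesc hA i' else 0)
      (fun i' _ => by by_cases h : K ≤ (i' : ℕ) <;> simp [h, hPSD' i']) (Finset.mem_univ i)
    simpa [sumTailEig, hi] using h
  have htail_lt : ∀ i : Fin N, K ≤ (i : ℕ) → eigDesc hA i < c :=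
    fun i hi => lt_of_le_of_lt (htail_le i hi) hgap
  have htop_ge : ∀ i : Fin N, (i : ℕ) < K → c ≤ eigDesc hA i := by
    intro i hi
    exact hanti (by simp [Fin.le_def]; omega)
  have horthU2 : ∀ i i' : Fin N, ∑ m, U i m * U i' m = if i = i' then 1 else 0 := by
    intro i i'
    have h := congrFun (congrFun hU2 i) i'
    simpa [Matrix.mul_apply, Matrix.one_apply] using h
  have hμσ : ∀ m, μ m = eigDesc hA (σ.symm m) := fun m => by rw [heig]; simp
  have hAsymm : ∀ a b, A a b = A b a := by
    intro a b
    have h := congrFun (congrFun hA.symm a) b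
    simpa [Matrix.conjTranspose_apply] using h
  have hmemrange : topEigSpace hA K ≤ LinearMap.range (P₀ * P₀ᵀ).mulVecLin := by
    apply iSup_le
    rintro ⟨i, hi⟩ v hv
    rw [LinearMap.mem_ker] at hv
    have hv' : A *ᵥ v = eigDesc hA i • v := by
      have h := hv
      simp only [LinearMap.sub_apply, LinearMap.smul_apply, LinearMap.id_apply,
        Matrix.mulVecLin_apply] at h
      exact sub_eq_zero.mp h
    set w : Fin N → ℝ := fun m => ∑ i', U i' m * v i' with hwdef
    have hUw : ∀ i', (∑ m, U i' m * w m) = v i' := by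
      intro i'
      calc ∑ m, U i' m * w m = ∑ m, ∑ i'', U i' m * (U i'' m * v i'') := by
            apply Finset.sum_congr rfl; intro m _; rw [hwdef, Finset.mul_sum]
        _ = ∑ i'', (∑ m, U i' m * U i'' m) * v i'' := by
            rw [Finset.sum_comm]
            apply Finset.sum_congr rfl; intro i'' _
            rw [Finset.sum_mul]; apply Finset.sum_congr rfl; intro m _; ring
        _ = v i' := by
            simp only [horthU2]
            simp
    have hw0 : ∀ m, K ≤ ((σ.symm m : Fin N) : ℕ) → w m = 0 := by
      intro m hm
      have hmu : μ m * w m = eigDesc hA i * w m := by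
        calc μ m * w m = ∑ i', (μ m * U i' m) * v i' := by
              rw [hwdef, Finset.mul_sum]; apply Finset.sum_congr rfl; intro i' _; ring
          _ = ∑ i', (∑ k, A i' k * U k m) * v i' := by
              apply Finset.sum_congr rfl; intro i' _
              have h := congrFun (hcolEig m) i'
              simp only [Matrix.mulVec, dotProduct, Pi.smul_apply,
                smul_eq_mul] at h
              rw [← h]
          _ = ∑ k, U k m * (∑ i', A k i' * v i') := by
              simp only [Finset.sum_mul, Finset.mul_sum]
              rw [Finset.sum_comm]
              exact Finset.sum_congr rfl fun k _ => Finset.sum_congr rfl fun i' _ => by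
                rw [hAsymm i' k]; ring
          _ = ∑ k, U k m * (eigDesc hA i * v k) := by
              apply Finset.sum_congr rfl; intro k _
              have h := congrFun hv' k
              simp only [Matrix.mulVec, dotProduct, Pi.smul_apply,
                smul_eq_mul] at h
              rw [h]
          _ = eigDesc hA i * w m := by
              rw [hwdef, Finset.mul_sum]; apply Finset.sum_congr rfl; intro k _; ring
      have hne : μ m ≠ eigDesc hA i := by
        have h1 : μ m < c := by rw [hμσ m]; exact htail_lt _ hm
        have h2 : c ≤ eigDesc hA i := htop_ge i hi
        exact ne_of_lt (lt_of_lt_of_le h1 h2)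
      have h3 : (μ m - eigDesc hA i) * w m = 0 := by rw [sub_mul, hmu, sub_self]
      exact (mul_eq_zero.mp h3).resolve_left (sub_ne_zero.mpr hne)
    refine ⟨v, ?_⟩
    show (P₀ * P₀ᵀ) *ᵥ v = v
    funext i'
    calc ((P₀ * P₀ᵀ) *ᵥ v) i'
          = ∑ j, (∑ a, U i' (σ (Fin.castLE hKN a)) * U j (σ (Fin.castLE hKN a))) * v j := by
          simp [Matrix.mulVec, dotProduct, Matrix.mul_apply, hPdef]
      _ = ∑ a, U i' (σ (Fin.castLE hKN a)) * w (σ (Fin.castLE hKN a)) := by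
          simp only [Finset.sum_mul, Finset.mul_sum]
          rw [Finset.sum_comm]
          refine Finset.sum_congr rfl fun a _ => ?_
          rw [hwdef]
          simp only [Finset.mul_sum]
          exact Finset.sum_congr rfl fun j _ => by ring
      _ = ∑ m, U i' m * w m :=
          (sum_reindex_top hK1 hKN σ (fun m => U i' m * w m)
            (fun m hm => by show U i' m * w m = 0; rw [hw0 m hm, mul_zero])).symm
      _ = v i' := hUw i'
  refine ⟨P₀, horth, heigP, hmemrange, ?_⟩
  intro Z hZ ht
  set Q : Matrix (Fin N) (Fin K) ℝ := Uᵀ * Z with hQdef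
  have hZUQ : Z = U * Q := by rw [hQdef, ← Matrix.mul_assoc, hU2, Matrix.one_mul]
  have hQ1 : Qᵀ * Q = 1 := by
    rw [hQdef, Matrix.transpose_mul, Matrix.transpose_transpose,
      Matrix.mul_assoc, ← Matrix.mul_assoc U Uᵀ Z, hU2, Matrix.one_mul, hZ]
  set s : Fin N → ℝ := fun m => ∑ k, Q m k ^ 2 with hsdef
  have hs0 : ∀ m, 0 ≤ s m := fun m => Finset.sum_nonneg fun _ _ => sq_nonneg _
  have hQQdiag : ∀ m, (Q * Qᵀ) m m = s m := by
    intro m; simp [Matrix.mul_apply, hsdef, sq]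
  have hMM : (Q * Qᵀ) * (Q * Qᵀ) = Q * Qᵀ := by
    rw [Matrix.mul_assoc, ← Matrix.mul_assoc Qᵀ Q Qᵀ, hQ1, Matrix.one_mul]
  have hMsymmM : (Q * Qᵀ)ᵀ = Q * Qᵀ := by
    rw [Matrix.transpose_mul, Matrix.transpose_transpose]
  have hMsymm : ∀ a b, (Q * Qᵀ) a b = (Q * Qᵀ) b a := fun a b =>
    (congrFun (congrFun hMsymmM.symm a) b).trans (Matrix.transpose_apply _ _ _)
  have hs1 : ∀ m, s m ≤ 1 := by
    intro m
    have h1 : (Q * Qᵀ) m m = ∑ j, ((Q * Qᵀ) m j) ^ 2 := by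
      have h := congrFun (congrFun hMM m) m
      rw [Matrix.mul_apply] at h
      rw [← h]
      apply Finset.sum_congr rfl; intro j _
      rw [sq, hMsymm j m]
    have h2 : ((Q * Qᵀ) m m) ^ 2 ≤ ∑ j, ((Q * Qᵀ) m j) ^ 2 :=
      Finset.single_le_sum (f := fun j => ((Q * Qᵀ) m j) ^ 2)
        (fun j _ => sq_nonneg _) (Finset.mem_univ m)
    rw [← hQQdiag m]
    nlinarith [h1, h2]
  have hsK : ∑ m, s m = (K : ℝ) := by
    calc ∑ m, s m = ∑ k : Fin K, ∑ m, Q m k ^ 2 := Finset.sum_comm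
      _ = ∑ _k : Fin K, (1 : ℝ) := by
          apply Finset.sum_congr rfl; intro k _
          have h := congrFun (congrFun hQ1 k) k
          simpa [Matrix.mul_apply, Matrix.one_apply, sq] using h
      _ = (K : ℝ) := by simp
  have htr : (Zᵀ * A * Z).trace = ∑ m, μ m * s m := by
    have hform : Zᵀ * A * Z = Qᵀ * Matrix.diagonal μ * Q := by
      rw [hZUQ, hspec, Matrix.transpose_mul]
      simp only [Matrix.mul_assoc]
      rw [← Matrix.mul_assoc Uᵀ U Q, hU1, Matrix.one_mul]
      rw [← Matrix.mul_assoc Uᵀ U _, hU1, Matrix.one_mul]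
    rw [hform, Matrix.trace_mul_comm, ← Matrix.mul_assoc]
    simp only [Matrix.trace, Matrix.diag_apply, Matrix.mul_diagonal]
    exact Finset.sum_congr rfl fun m _ => by rw [hQQdiag m]; ring
  have hbound : ∀ m, μ m * s m
      ≤ c * s m + (if ((σ.symm m : Fin N) : ℕ) < K then μ m - c else 0) := by
    intro m
    by_cases h : ((σ.symm m : Fin N) : ℕ) < K
    · have h1 : c ≤ μ m := by rw [hμσ m]; exact htop_ge _ h
      have h2 := hs1 m
      simp only [h, if_true]
      nlinarith
    · have h1 : μ m < c := by rw [hμσ m]; exact htail_lt _ (Nat.le_of_not_lt h)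
      have h3 := hs0 m
      simp only [h, if_false]
      nlinarith
  have htopsum : ∑ m, (if ((σ.symm m : Fin N) : ℕ) < K then μ m - c else 0)
      = sumTopEig hA K - K * c := by
    have h1 : ∑ m, (if ((σ.symm m : Fin N) : ℕ) < K then μ m - c else 0)
        = ∑ i : Fin N, (if (i : ℕ) < K then μ (σ i) - c else 0) :=
      (Fintype.sum_equiv σ (fun i => if (i : ℕ) < K then μ (σ i) - c else 0)
        (fun m => if ((σ.symm m : Fin N) : ℕ) < K then μ m - c else 0)
        (fun i => by simp)).symm
    rw [h1, sum_ite_lt hK1 hKN (fun i => μ (σ i) - c), sumTopEig,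
      sum_ite_lt hK1 hKN, Finset.sum_sub_distrib, Finset.sum_const,
      Finset.card_univ, Fintype.card_fin]
    have h2 : ∀ a : Fin K, μ (σ (Fin.castLE hKN a)) = eigDesc hA (Fin.castLE hKN a) :=
      fun a => (heig _).symm
    rw [Finset.sum_congr rfl (fun a _ => h2 a)]
    simp [nsmul_eq_mul]
  have hsumbound : ∑ m, (c * s m + (if ((σ.symm m : Fin N) : ℕ) < K then μ m - c else 0))
      = sumTopEig hA K := by
    rw [Finset.sum_add_distrib, htopsum, ← Finset.mul_sum, hsK]
    ring
  have heqterm : ∀ m ∈ Finset.univ, μ m * s m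
      = c * s m + (if ((σ.symm m : Fin N) : ℕ) < K then μ m - c else 0) := by
    rw [← Finset.sum_eq_sum_iff_of_le (fun m _ => hbound m)]
    have hge : sumTopEig hA K ≤ ∑ m, μ m * s m := by rw [← htr]; exact ht
    have hle : ∑ m, μ m * s m ≤ sumTopEig hA K := by
      calc ∑ m, μ m * s m ≤ _ := Finset.sum_le_sum (fun m _ => hbound m)
        _ = sumTopEig hA K := hsumbound
    linarith [hsumbound]
  have hrow : ∀ m, K ≤ ((σ.symm m : Fin N) : ℕ) → ∀ k, Q m k = 0 := by
    intro m hm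
    have h := heqterm m (Finset.mem_univ m)
    rw [if_neg (not_lt.mpr hm), add_zero] at h
    have h1 : μ m < c := by rw [hμσ m]; exact htail_lt _ hm
    have hsm : s m = 0 := by nlinarith [hs0 m]
    intro k
    have h2 : ∀ k' ∈ Finset.univ, (0:ℝ) ≤ Q m k' ^ 2 := fun k' _ => sq_nonneg _
    have h3 := (Finset.sum_eq_zero_iff_of_nonneg h2).mp hsm k (Finset.mem_univ k)
    exact pow_eq_zero_iff (by norm_num) |>.mp h3
  set R : Matrix (Fin K) (Fin K) ℝ := Matrix.of (fun a b => Q (σ (Fin.castLE hKN a)) b) with hRdef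
  have hR1 : Rᵀ * R = 1 := by
    ext a b
    have hq := congrFun (congrFun hQ1 a) b
    simp only [Matrix.mul_apply, Matrix.transpose_apply] at hq
    have hre := sum_reindex_top hK1 hKN σ (fun m => Q m a * Q m b)
      (fun m hm => by show Q m a * Q m b = 0; rw [hrow m hm a, zero_mul])
    have hre' : ∑ m, Q m a * Q m b
        = ∑ x : Fin K, Q (σ (Fin.castLE hKN x)) a * Q (σ (Fin.castLE hKN x)) b := hre
    simp only [Matrix.mul_apply, Matrix.transpose_apply, hRdef, Matrix.of_apply]
    rw [← hre', hq]
  have hRR : R * Rᵀ = 1 := mul_eq_one_comm.mp hR1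
  have hUQ : U * Q = P₀ * R := by
    ext i k
    rw [Matrix.mul_apply, Matrix.mul_apply]
    have hre := sum_reindex_top hK1 hKN σ (fun m => U i m * Q m k)
      (fun m hm => by show U i m * Q m k = 0; rw [hrow m hm k, mul_zero])
    simpa [hPdef, hRdef] using hre
  rw [hZUQ, hUQ, Matrix.transpose_mul, Matrix.mul_assoc,
    ← Matrix.mul_assoc R Rᵀ P₀ᵀ, hRR, Matrix.one_mul]

lemma frob_expand {N K C : ℕ} (Z : Matrix (Fin N) (Fin K) ℝ) (hZ : Zᵀ * Z = 1)
    (Y : Matrix (Fin N) (Fin C) ℝ) (W : Matrix (Fin K) (Fin C) ℝ) :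
    frobSq (Z * W - Y) = frobSq (W - Zᵀ * Y) + frobSq Y - frobSq (Zᵀ * Y) := by
  have h1 : Zᵀ * (Z * W) = W := by rw [← Matrix.mul_assoc, hZ, Matrix.one_mul]
  have hmat : (Z * W - Y)ᵀ * (Z * W - Y)
      = (W - Zᵀ * Y)ᵀ * (W - Zᵀ * Y) + Yᵀ * Y - (Zᵀ * Y)ᵀ * (Zᵀ * Y) := by
    simp only [Matrix.transpose_sub, Matrix.transpose_mul, Matrix.transpose_transpose,
      Matrix.sub_mul, Matrix.mul_sub, Matrix.mul_assoc, h1]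
    abel
  rw [frobSq_eq_trace, frobSq_eq_trace, frobSq_eq_trace, frobSq_eq_trace, hmat,
    Matrix.trace_sub, Matrix.trace_add]

lemma frob_lower {N K C : ℕ} (Z : Matrix (Fin N) (Fin K) ℝ) (hZ : Zᵀ * Z = 1)
    (Y : Matrix (Fin N) (Fin C) ℝ) (W : Matrix (Fin K) (Fin C) ℝ) :
    frobSq Y - frobSq (Zᵀ * Y) ≤ frobSq (Z * W - Y) := by
  rw [frob_expand Z hZ Y W]
  have := frobSq_nonneg (W - Zᵀ * Y)
  linarith

lemma frob_at_opt {N K C : ℕ} (Z : Matrix (Fin N) (Fin K) ℝ) (hZ : Zᵀ * Z = 1)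
    (Y : Matrix (Fin N) (Fin C) ℝ) :
    frobSq (Z * (Zᵀ * Y) - Y) = frobSq Y - frobSq (Zᵀ * Y) := by
  rw [frob_expand Z hZ Y (Zᵀ * Y), sub_self]
  have : frobSq (0 : Matrix (Fin K) (Fin C) ℝ) = 0 := by simp [frobSq]
  rw [this]
  ring

lemma frobSq_proj_trace {N K C : ℕ} (Z : Matrix (Fin N) (Fin K) ℝ)
    (Y : Matrix (Fin N) (Fin C) ℝ) :
    frobSq (Zᵀ * Y) = (Zᵀ * (Y * Yᵀ) * Z).trace := by
  rw [frobSq_eq_trace, Matrix.transpose_mul, Matrix.transpose_transpose,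
    Matrix.trace_mul_comm]
  rw [Matrix.mul_assoc, Matrix.mul_assoc, Matrix.mul_assoc]
/-- Step 3 of Theorem 2: if the top-`K` eigenspace `S` of `YYᵀ` is
contained in the column space of `X`, then for every normalized global minimizer
`(V*, W*)` of `(V, W) ↦ ‖XVW − Y‖_F²` with `(V*)ᵀXᵀXV* = I_K`, the Gram matrix
`ZZᵀ` of `Z = XV*` is the orthogonal projection onto `S`; in particular
`ZZᵀ = P Pᵀ` for any matrix `P` of orthonormal eigenvectors of `YYᵀ` associated with
its `K` largest eigenvalues. -/
theorem stmt_13 {N D C K : ℕ}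
    (X : Matrix (Fin N) (Fin D) ℝ) (Y : Matrix (Fin N) (Fin C) ℝ)
    (hrank : X.rank = D) (hK1 : 1 ≤ K) (hKD : K ≤ D) (hKN : K ≤ N)
    -- eigenvalue condition λ_K > Σ_{i>K} λ_i on the eigenvalues of YYᵀ
    (hgap : eigDesc (isHermitian_mult Y) ⟨K - 1, by omega⟩
          > sumTailEig (isHermitian_mult Y) K)
    -- the top-K eigenspace of YYᵀ is contained in the column space of X
    (hsub : topEigSpace (isHermitian_mult Y) K ≤ LinearMap.range X.mulVecLin) :
    ∀ (Vs : Matrix (Fin D) (Fin K) ℝ) (Ws : Matrix (Fin K) (Fin C) ℝ),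
      (∀ (V : Matrix (Fin D) (Fin K) ℝ) (W : Matrix (Fin K) (Fin C) ℝ),
        frobSq (X * Vs * Ws - Y) ≤ frobSq (X * V * W - Y)) →
      Vsᵀ * Xᵀ * X * Vs = 1 →
      -- ZZᵀ is symmetric, idempotent, with range the top-K eigenspace of YYᵀ:
      ((X * Vs) * (X * Vs)ᵀ)ᵀ = (X * Vs) * (X * Vs)ᵀ ∧
      ((X * Vs) * (X * Vs)ᵀ) * ((X * Vs) * (X * Vs)ᵀ) = (X * Vs) * (X * Vs)ᵀ ∧
      LinearMap.range (Matrix.mulVecLin ((X * Vs) * (X * Vs)ᵀ))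
        = topEigSpace (isHermitian_mult Y) K ∧
      -- and ZZᵀ = P Pᵀ for any orthonormal top-K eigenvector matrix P of YYᵀ:
      ∀ P : Matrix (Fin N) (Fin K) ℝ, Pᵀ * P = 1 →
        (∀ j : Fin K, (Y * Yᵀ) *ᵥ (fun i => P i j)
          = eigDesc (isHermitian_mult Y) (Fin.castLE hKN j) • (fun i => P i j)) →
        (X * Vs) * (X * Vs)ᵀ = P * Pᵀ := by
  intro Vs Ws hmin hnorm
  have hA : (Y * Yᵀ).IsHermitian := isHermitian_mult Y
  have hPSD : ∀ i, 0 ≤ hA.eigenvalues i := fun i =>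
    (Matrix.posSemidef_self_mul_conjTranspose Y).eigenvalues_nonneg i
  have hgap' : eigDesc hA ⟨K - 1, by omega⟩ > sumTailEig hA K := hgap
  obtain ⟨P₀, hP₀orth, hP₀eig, hP₀range, hKyFan⟩ :=
    spectralPack hK1 hKN hA hPSD hgap'
  set Z : Matrix (Fin N) (Fin K) ℝ := X * Vs with hZdef
  have hZ : Zᵀ * Z = 1 := by
    rw [hZdef, Matrix.transpose_mul, Matrix.mul_assoc, ← Matrix.mul_assoc Xᵀ X Vs,
      ← Matrix.mul_assoc Vsᵀ (Xᵀ * X) Vs, ← Matrix.mul_assoc Vsᵀ Xᵀ X, hnorm]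
  -- construct V₀ with X * V₀ = P₀
  have hcolmem : ∀ j : Fin K, (fun i => P₀ i j) ∈ LinearMap.range X.mulVecLin := by
    intro j
    apply hsub
    refine le_iSup (fun i : {i : Fin N // (i : ℕ) < K} =>
      LinearMap.ker ((Y * Yᵀ).mulVecLin - eigDesc hA i.1 • LinearMap.id))
      ⟨Fin.castLE hKN j, j.isLt⟩ ?_
    rw [LinearMap.mem_ker]
    have h := hP₀eig j
    simp only [LinearMap.sub_apply, LinearMap.smul_apply, LinearMap.id_apply,
      Matrix.mulVecLin_apply, h, sub_self]
  choose u hu using hcolmem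
  set V₀ : Matrix (Fin D) (Fin K) ℝ := Matrix.of fun d j => u j d with hV₀def
  have hXV₀ : X * V₀ = P₀ := by
    ext i j
    have h := congrFun (hu j) i
    simpa [Matrix.mul_apply, Matrix.mulVec, dotProduct, hV₀def] using h
  -- trace bound from minimality
  have htrP₀ : (P₀ᵀ * (Y * Yᵀ) * P₀).trace = sumTopEig hA K :=
    trace_conj_orth_eig hK1 hKN hA P₀ hP₀orth hP₀eig
  have hcomp : frobSq (X * Vs * Ws - Y) ≤ frobSq Y - sumTopEig hA K := by
    have h1 := hmin V₀ (P₀ᵀ * Y)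
    rw [hXV₀] at h1
    rw [frob_at_opt P₀ hP₀orth Y, frobSq_proj_trace P₀ Y, htrP₀] at h1
    exact h1
  have hlow : frobSq Y - (Zᵀ * (Y * Yᵀ) * Z).trace ≤ frobSq (X * Vs * Ws - Y) := by
    have h1 := frob_lower Z hZ Y Ws
    rw [frobSq_proj_trace Z Y] at h1
    exact h1
  have ht : sumTopEig hA K ≤ (Zᵀ * (Y * Yᵀ) * Z).trace := by linarith
  have hZZ : Z * Zᵀ = P₀ * P₀ᵀ := hKyFan Z hZ ht
  have hrangeeq : LinearMap.range (Z * Zᵀ).mulVecLin = topEigSpace hA K := by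
    rw [hZZ]
    refine le_antisymm ?_ hP₀range
    rw [range_PPt P₀ hP₀orth]
    exact range_le_topEigSpace hKN hA P₀ hP₀eig
  have hfintop : Module.finrank ℝ (topEigSpace hA K) = K := by
    rw [← hrangeeq, hZZ, range_PPt P₀ hP₀orth]
    exact finrank_range_orth P₀ hP₀orth
  have hsymZZ : (Z * Zᵀ)ᵀ = Z * Zᵀ := by
    rw [Matrix.transpose_mul, Matrix.transpose_transpose]
  have hidemZZ : (Z * Zᵀ) * (Z * Zᵀ) = Z * Zᵀ := by
    rw [Matrix.mul_assoc, ← Matrix.mul_assoc Zᵀ Z Zᵀ, hZ, Matrix.one_mul]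
  refine ⟨hsymZZ, hidemZZ, hrangeeq, ?_⟩
  intro P hPorth hPeig
  have hPsym : (P * Pᵀ)ᵀ = P * Pᵀ := by
    rw [Matrix.transpose_mul, Matrix.transpose_transpose]
  have hPidem : (P * Pᵀ) * (P * Pᵀ) = P * Pᵀ := by
    rw [Matrix.mul_assoc, ← Matrix.mul_assoc Pᵀ P Pᵀ, hPorth, Matrix.one_mul]
  have hPrange : LinearMap.range (P * Pᵀ).mulVecLin = topEigSpace hA K := by
    rw [range_PPt P hPorth]
    refine Submodule.eq_of_le_of_finrank_le (range_le_topEigSpace hKN hA P hPeig) ?_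
    rw [hfintop, finrank_range_orth P hPorth]
  exact proj_ext hsymZZ hPsym hidemZZ hPidem (by rw [hrangeeq, hPrange])

end
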